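/- Let Ω ⊂ ℝⁿ be Lebesgue measurable with finite measure, (u_k) ⊂ L²(Ω) a sequence with Σ_{k=1}^∞ ‖u_{k+1} − u_k‖²_{L²(Ω)} < ∞, and let u₀ > 0 be such that for every k and almost every x ∈ Ω, u_k(x) = 0 or |u_k(x)| ≥ u₀. Then the characteristic functions χ_k of the sets I_k := {x ∈ Ω : u_k(x) ≠ 0} form a Cauchy sequence in L¹(Ω) and converge in L¹(Ω) and pointwise almost everywhere to a characteristic function χ of some measurable subset of Ω. -/

import Mathlib

open MeasureTheory Filter

/-- The characteristic function of the set `{x | w x ≠ 0}`. -/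
noncomputable def chiSupp {α : Type*} (w : α → ℝ) : α → ℝ :=
  Set.indicator {x | w x ≠ 0} (fun _ => (1 : ℝ))

lemma chiSupp_apply {α : Type*} (w : α → ℝ) (x : α) :
    chiSupp w x = if w x ≠ 0 then 1 else 0 := by
  simp only [chiSupp, Set.indicator, Set.mem_setOf_eq]

lemma chiSupp_mem {α : Type*} (w : α → ℝ) (x : α) :
    chiSupp w x = 0 ∨ chiSupp w x = 1 := by
  rw [chiSupp_apply]; split <;> simp

lemma chiSupp_eq_one_iff {α : Type*} (w : α → ℝ) (x : α) :
    chiSupp w x = 1 ↔ w x ≠ 0 := by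
  rw [chiSupp_apply]; split <;> simp_all

lemma key_est (u₀ a b : ℝ) (hu₀ : 0 < u₀) (ha : a = 0 ∨ u₀ ≤ |a|)
    (hb : b = 0 ∨ u₀ ≤ |b|) :
    |(if a ≠ 0 then (1:ℝ) else 0) - (if b ≠ 0 then (1:ℝ) else 0)| ≤ (a - b) ^ 2 / u₀ ^ 2 := by
  have hu2 : 0 < u₀ ^ 2 := by positivity
  rcases eq_or_ne a 0 with ha0 | ha0 <;> rcases eq_or_ne b 0 with hb0 | hb0
  · simp only [ha0, hb0, ne_eq, not_true_eq_false, if_false, sub_zero, abs_zero]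
    positivity
  · subst ha0
    have hb' : u₀ ≤ |b| := hb.resolve_left hb0
    have h1 : u₀ ^ 2 ≤ (0 - b) ^ 2 := by
      have hsq := sq_abs b
      nlinarith
    simp only [ne_eq, not_true_eq_false, if_false, hb0, not_false_eq_true, if_true]
    rw [le_div_iff₀ hu2]
    calc |(0:ℝ) - 1| * u₀ ^ 2 = u₀ ^ 2 := by norm_num
      _ ≤ (0 - b) ^ 2 := h1
  · subst hb0
    have ha' : u₀ ≤ |a| := ha.resolve_left ha0
    have h1 : u₀ ^ 2 ≤ (a - 0) ^ 2 := by
      have hsq := sq_abs a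
      nlinarith
    simp only [ne_eq, not_true_eq_false, if_false, ha0, not_false_eq_true, if_true]
    rw [le_div_iff₀ hu2]
    calc |(1:ℝ) - 0| * u₀ ^ 2 = u₀ ^ 2 := by norm_num
      _ ≤ (a - 0) ^ 2 := h1
  · simp only [ha0, hb0, ne_eq, not_false_eq_true, if_true, sub_self, abs_zero]
    positivity

/-- Main abstract lemma: if the increments of `chiSupp ∘ f` are summable in `L¹`,
then the `chiSupp (f k)` are `L¹`-Cauchy and converge in `L¹` and pointwise a.e. to the
indicator of a measurable set. -/
lemma chi_converges_aux {X : Type*} [MeasurableSpace X] (μ : Measure X)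
    (hμfin : μ Set.univ ≠ ⊤) (f : ℕ → X → ℝ) (hfm : ∀ k, StronglyMeasurable (f k))
    (hΔsum : (∑' k : ℕ, ∫⁻ x, ENNReal.ofReal |chiSupp (f (k+1)) x - chiSupp (f k) x| ∂μ) ≠ ⊤) :
    (∀ ε : ℝ, 0 < ε → ∃ N : ℕ, ∀ m ≥ N, ∀ k ≥ N,
      (∫⁻ x, ENNReal.ofReal |chiSupp (f m) x - chiSupp (f k) x| ∂μ) < ENNReal.ofReal ε)
    ∧ ∃ A : Set X, MeasurableSet A ∧
      Tendsto (fun k : ℕ => ∫⁻ x, ENNReal.ofReal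
          |chiSupp (f k) x - A.indicator (fun _ => (1 : ℝ)) x| ∂μ) atTop (nhds 0)
      ∧ (∀ᵐ x ∂μ, Tendsto (fun k : ℕ => chiSupp (f k) x) atTop
            (nhds (A.indicator (fun _ => (1 : ℝ)) x))) := by
  classical
  set χ : ℕ → X → ℝ := fun k => chiSupp (f k) with hχdef
  have hχmem : ∀ k x, χ k x = 0 ∨ χ k x = 1 := fun k x => chiSupp_mem _ _
  have hSm : ∀ k, MeasurableSet {x | f k x ≠ 0} := fun k =>
    ((hfm k).measurable (measurableSet_singleton (0:ℝ))).compl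
  have hχm : ∀ k, Measurable (χ k) := fun k => measurable_const.indicator (hSm k)
  have hmeasΔ : ∀ k, Measurable fun x => ENNReal.ofReal |χ (k+1) x - χ k x| :=
    fun k => (((hχm (k+1)).sub (hχm k)).abs).ennreal_ofReal
  have hintsum : (∫⁻ x, ∑' k : ℕ, ENNReal.ofReal |χ (k+1) x - χ k x| ∂μ) ≠ ⊤ := by
    rw [lintegral_tsum fun k => (hmeasΔ k).aemeasurable]; exact hΔsum
  have haefin : ∀ᵐ x ∂μ, (∑' k : ℕ, ENNReal.ofReal |χ (k+1) x - χ k x|) ≠ ⊤ := by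
    have h := ae_lt_top (Measurable.ennreal_tsum fun k => hmeasΔ k) hintsum
    exact h.mono fun x hx => hx.ne
  -- a.e. eventual constancy
  have haeconst : ∀ᵐ x ∂μ, ∃ N : ℕ, ∀ k, N ≤ k → χ k x = χ N x := by
    filter_upwards [haefin] with x hx
    have htend : Tendsto (fun k => ENNReal.ofReal |χ (k+1) x - χ k x|) atTop (nhds 0) :=
      ENNReal.tendsto_atTop_zero_of_tsum_ne_top hx
    have hev : ∀ᶠ k in atTop, ENNReal.ofReal |χ (k+1) x - χ k x| < 1 :=
      htend.eventually (gt_mem_nhds (by norm_num))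
    obtain ⟨N, hN⟩ := hev.exists_forall_of_atTop
    refine ⟨N, fun k hk => ?_⟩
    induction k, hk using Nat.le_induction with
    | base => rfl
    | succ k hk ih =>
      have hk1 := hN k hk
      have : χ (k+1) x = χ k x := by
        rcases hχmem (k+1) x with h1 | h1 <;> rcases hχmem k x with h2 | h2 <;>
          simp only [h1, h2] at hk1 ⊢ <;> norm_num at hk1
      rw [this, ih]
  -- the limit set
  set A : Set X := ⋃ N : ℕ, ⋂ k : ℕ, ⋂ (_ : N ≤ k), {x | f k x ≠ 0} with hAdef
  have hAm : MeasurableSet A :=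
    MeasurableSet.iUnion fun N => MeasurableSet.iInter fun k =>
      MeasurableSet.iInter fun _ => hSm k
  -- a.e. pointwise convergence to indicator of A
  have haeptw : ∀ᵐ x ∂μ, Tendsto (fun k => χ k x) atTop
      (nhds (A.indicator (fun _ => (1:ℝ)) x)) := by
    filter_upwards [haeconst] with x hx
    obtain ⟨N, hN⟩ := hx
    have hconst : ∀ᶠ k in atTop, χ N x = χ k x :=
      eventually_atTop.2 ⟨N, fun k hk => (hN k hk).symm⟩
    have htend : Tendsto (fun k => χ k x) atTop (nhds (χ N x)) :=
      Tendsto.congr' hconst tendsto_const_nhds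
    rcases hχmem N x with h0 | h1
    · -- limit 0 : x ∉ A
      have hxA : x ∉ A := by
        intro hxA
        obtain ⟨M, hM⟩ := Set.mem_iUnion.1 hxA
        simp only [Set.mem_iInter, Set.mem_setOf_eq] at hM
        have hfk := hM (max M N) (le_max_left _ _)
        have : χ (max M N) x = 1 := (chiSupp_eq_one_iff _ _).2 hfk
        rw [hN _ (le_max_right _ _), h0] at this
        norm_num at this
      rw [Set.indicator_of_notMem hxA]
      rw [h0] at htend; exact htend
    · -- limit 1 : x ∈ A
      have hxA : x ∈ A := by
        apply Set.mem_iUnion.2 ⟨N, ?_⟩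
        simp only [Set.mem_iInter, Set.mem_setOf_eq]
        intro k hk
        have : χ k x = 1 := by rw [hN k hk, h1]
        exact (chiSupp_eq_one_iff _ _).1 this
      rw [Set.indicator_of_mem hxA]
      rw [h1] at htend; exact htend
  -- L¹ convergence via dominated convergence
  have hind : Measurable (A.indicator (fun _ => (1:ℝ))) :=
    measurable_const.indicator hAm
  have hL1 : Tendsto (fun k => ∫⁻ x, ENNReal.ofReal
      |χ k x - A.indicator (fun _ => (1:ℝ)) x| ∂μ) atTop (nhds 0) := by
    have := tendsto_lintegral_of_dominated_convergence (μ := μ)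
      (F := fun k x => ENNReal.ofReal |χ k x - A.indicator (fun _ => (1:ℝ)) x|)
      (f := fun _ => 0) (bound := fun _ => 2)
      (fun k => (((hχm k).sub hind).abs).ennreal_ofReal)
      (fun k => Eventually.of_forall fun x => by
        have h1 : |χ k x - A.indicator (fun _ => (1:ℝ)) x| ≤ 2 := by
          have hi : A.indicator (fun _ => (1:ℝ)) x = 0 ∨
              A.indicator (fun _ => (1:ℝ)) x = 1 := by
            by_cases hxA : x ∈ A
            · right; rw [Set.indicator_of_mem hxA]
            · left; rw [Set.indicator_of_notMem hxA]
          rcases hχmem k x with h | h <;> rcases hi with h' | h' <;>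
            rw [h, h'] <;> norm_num
        calc ENNReal.ofReal |χ k x - A.indicator (fun _ => (1:ℝ)) x|
            ≤ ENNReal.ofReal 2 := ENNReal.ofReal_le_ofReal h1
          _ = 2 := by norm_num)
      (by
        rw [lintegral_const]
        exact ENNReal.mul_ne_top (by norm_num) hμfin)
      (by
        filter_upwards [haeptw] with x hx
        have : Tendsto (fun k => |χ k x - A.indicator (fun _ => (1:ℝ)) x|) atTop
            (nhds |A.indicator (fun _ => (1:ℝ)) x - A.indicator (fun _ => (1:ℝ)) x|) :=
          (hx.sub tendsto_const_nhds).abs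
        rw [sub_self, abs_zero] at this
        have h2 := (ENNReal.continuous_ofReal.tendsto 0).comp this
        simpa [Function.comp_def] using h2)
    simpa using this
  refine ⟨?_, A, hAm, hL1, haeptw⟩
  -- Cauchy property
  intro ε hε
  have hε2 : (0:ENNReal) < ENNReal.ofReal (ε / 2) := ENNReal.ofReal_pos.2 (by positivity)
  have hev : ∀ᶠ k in atTop, (∫⁻ x, ENNReal.ofReal
      |χ k x - A.indicator (fun _ => (1:ℝ)) x| ∂μ) < ENNReal.ofReal (ε / 2) :=
    hL1.eventually (gt_mem_nhds hε2)
  obtain ⟨N, hN⟩ := hev.exists_forall_of_atTop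
  refine ⟨N, fun m hm k hk => ?_⟩
  have hsplit : (∫⁻ x, ENNReal.ofReal |χ m x - χ k x| ∂μ)
      ≤ (∫⁻ x, ENNReal.ofReal |χ m x - A.indicator (fun _ => (1:ℝ)) x| ∂μ)
        + ∫⁻ x, ENNReal.ofReal |χ k x - A.indicator (fun _ => (1:ℝ)) x| ∂μ := by
    rw [← lintegral_add_left (show Measurable fun x => ENNReal.ofReal |χ m x - A.indicator (fun _ => (1:ℝ)) x| from ((hχm m).sub hind).abs.ennreal_ofReal)]
    apply lintegral_mono
    intro x
    calc ENNReal.ofReal |χ m x - χ k x|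
        ≤ ENNReal.ofReal (|χ m x - A.indicator (fun _ => (1:ℝ)) x|
            + |χ k x - A.indicator (fun _ => (1:ℝ)) x|) := by
          apply ENNReal.ofReal_le_ofReal
          have := abs_sub_le (χ m x) (A.indicator (fun _ => (1:ℝ)) x) (χ k x)
          rwa [abs_sub_comm (A.indicator (fun _ => (1:ℝ)) x) (χ k x)] at this
      _ = _ := ENNReal.ofReal_add (abs_nonneg _) (abs_nonneg _)
  calc (∫⁻ x, ENNReal.ofReal |χ m x - χ k x| ∂μ)
      ≤ _ := hsplit
    _ < ENNReal.ofReal (ε / 2) + ENNReal.ofReal (ε / 2) :=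
        ENNReal.add_lt_add (hN m hm) (hN k hk)
    _ = ENNReal.ofReal ε := by
        rw [← ENNReal.ofReal_add (by positivity) (by positivity)]
        norm_num

/-- The key `L²` estimate: the `L¹` increments of the characteristic functions are controlled
by the squared `L²` increments of `u`. -/
lemma chi_increment_bound {X : Type*} [MeasurableSpace X] {μ : Measure X}
    (v : Lp ℝ 2 μ) (u₀ : ℝ) (hu₀ : 0 < u₀) (g h : X → ℝ)
    (hg : ∀ᵐ x ∂μ, g x = 0 ∨ u₀ ≤ |g x|) (hh : ∀ᵐ x ∂μ, h x = 0 ∨ u₀ ≤ |h x|)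
    (hv : (v : X → ℝ) =ᵐ[μ] fun x => g x - h x) :
    (∫⁻ x, ENNReal.ofReal |chiSupp g x - chiSupp h x| ∂μ)
      ≤ ENNReal.ofReal (1 / u₀ ^ 2) * ENNReal.ofReal (‖v‖ ^ 2) := by
  have hae : ∀ᵐ x ∂μ, ENNReal.ofReal |chiSupp g x - chiSupp h x|
      ≤ ENNReal.ofReal (((v : X → ℝ) x) ^ 2 / u₀ ^ 2) := by
    filter_upwards [hg, hh, hv] with x h1 h2 hvx
    apply ENNReal.ofReal_le_ofReal
    have := key_est u₀ (g x) (h x) hu₀ h1 h2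
    rw [hvx]
    simpa only [chiSupp_apply] using this
  calc (∫⁻ x, ENNReal.ofReal |chiSupp g x - chiSupp h x| ∂μ)
      ≤ ∫⁻ x, ENNReal.ofReal (((v : X → ℝ) x) ^ 2 / u₀ ^ 2) ∂μ := lintegral_mono_ae hae
    _ = ∫⁻ x, ENNReal.ofReal (1 / u₀ ^ 2) * ENNReal.ofReal (((v : X → ℝ) x) ^ 2) ∂μ := by
        apply lintegral_congr; intro x
        rw [← ENNReal.ofReal_mul (by positivity), div_eq_mul_inv, one_div, mul_comm]
    _ = ENNReal.ofReal (1 / u₀ ^ 2) * ∫⁻ x, ENNReal.ofReal (((v : X → ℝ) x) ^ 2) ∂μ := by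
        rw [lintegral_const_mul]
        exact ((Lp.stronglyMeasurable v).measurable.pow_const 2).ennreal_ofReal
    _ = ENNReal.ofReal (1 / u₀ ^ 2) * ENNReal.ofReal (‖v‖ ^ 2) := by
        congr 1
        have hint : Integrable (fun x => ((v : X → ℝ) x) ^ 2) μ := by
          have h := L2.integrable_inner (𝕜 := ℝ) v v
          refine h.congr (Eventually.of_forall fun x => ?_)
          simp [RCLike.inner_apply, sq]
        rw [← ofReal_integral_eq_lintegral_ofReal hint
          (Eventually.of_forall fun x => by positivity)]
        congr 1
        have : (∫ x, ((v : X → ℝ) x) ^ 2 ∂μ) = inner (𝕜 := ℝ) v v := by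
          rw [L2.inner_def]
          apply integral_congr_ae
          exact Eventually.of_forall fun x => by
            simp [RCLike.inner_apply, sq]
        rw [this, real_inner_self_eq_norm_sq]

/-- if `(u_k) ⊂ L²(Ω)` (Ω ⊂ ℝⁿ of finite measure) satisfies
`Σ ‖u_{k+1} − u_k‖²_{L²} < ∞` and each `u_k` is, a.e., either `0` or of modulus `≥ u₀ > 0`,
then the characteristic functions `χ_k` of `{u_k ≠ 0}` form a Cauchy sequence in `L¹(Ω)` and
converge in `L¹(Ω)` and pointwise a.e. to the characteristic function `χ` of a measurable set. -/
theorem chi_converges (n : ℕ) (Ω : Set (EuclideanSpace ℝ (Fin n)))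
    (hΩ : MeasurableSet Ω) (hfin : volume Ω < ⊤)
    (u : ℕ → Lp ℝ 2 (volume.restrict Ω))
    (hsum : Summable fun k : ℕ => ‖u (k + 1) - u k‖ ^ 2)
    (u₀ : ℝ) (hu₀ : 0 < u₀)
    (hsparse : ∀ k : ℕ, ∀ᵐ x ∂(volume.restrict Ω),
      (u k : EuclideanSpace ℝ (Fin n) → ℝ) x = 0 ∨
        u₀ ≤ |(u k : EuclideanSpace ℝ (Fin n) → ℝ) x|) :
    (∀ ε : ℝ, 0 < ε → ∃ N : ℕ, ∀ m ≥ N, ∀ k ≥ N,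
      (∫⁻ x, ENNReal.ofReal |chiSupp (u m : EuclideanSpace ℝ (Fin n) → ℝ) x -
        chiSupp (u k : EuclideanSpace ℝ (Fin n) → ℝ) x| ∂(volume.restrict Ω))
        < ENNReal.ofReal ε)
    ∧ ∃ A : Set (EuclideanSpace ℝ (Fin n)), MeasurableSet A ∧
      Tendsto (fun k : ℕ => ∫⁻ x, ENNReal.ofReal
          |chiSupp (u k : EuclideanSpace ℝ (Fin n) → ℝ) x -
            A.indicator (fun _ => (1 : ℝ)) x| ∂(volume.restrict Ω)) atTop (nhds 0)
      ∧ (∀ᵐ x ∂(volume.restrict Ω),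
          Tendsto (fun k : ℕ => chiSupp (u k : EuclideanSpace ℝ (Fin n) → ℝ) x) atTop
            (nhds (A.indicator (fun _ => (1 : ℝ)) x))) := by
  have hμfin : (volume.restrict Ω) Set.univ ≠ ⊤ := by
    rw [Measure.restrict_apply_univ]; exact hfin.ne
  have hbound : ∀ k : ℕ, (∫⁻ x, ENNReal.ofReal
      |chiSupp (u (k+1) : EuclideanSpace ℝ (Fin n) → ℝ) x -
        chiSupp (u k : EuclideanSpace ℝ (Fin n) → ℝ) x| ∂(volume.restrict Ω))
      ≤ ENNReal.ofReal (1 / u₀ ^ 2) * ENNReal.ofReal (‖u (k+1) - u k‖ ^ 2) := by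
    intro k
    exact chi_increment_bound (u (k+1) - u k) u₀ hu₀ _ _ (hsparse (k+1)) (hsparse k)
      (Lp.coeFn_sub _ _)
  have hΔsum : (∑' k : ℕ, ∫⁻ x, ENNReal.ofReal
      |chiSupp (u (k+1) : EuclideanSpace ℝ (Fin n) → ℝ) x -
        chiSupp (u k : EuclideanSpace ℝ (Fin n) → ℝ) x| ∂(volume.restrict Ω)) ≠ ⊤ := by
    apply ne_top_of_le_ne_top
      (ENNReal.mul_ne_top (ENNReal.ofReal_ne_top (r := 1 / u₀ ^ 2))
        (ENNReal.ofReal_ne_top (r := ∑' k : ℕ, ‖u (k+1) - u k‖ ^ 2)))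
    calc _ ≤ ∑' k : ℕ, ENNReal.ofReal (1 / u₀ ^ 2) * ENNReal.ofReal (‖u (k+1) - u k‖ ^ 2) :=
          ENNReal.tsum_le_tsum hbound
      _ = ENNReal.ofReal (1 / u₀ ^ 2) * ∑' k : ℕ, ENNReal.ofReal (‖u (k+1) - u k‖ ^ 2) :=
          ENNReal.tsum_mul_left
      _ = ENNReal.ofReal (1 / u₀ ^ 2) * ENNReal.ofReal (∑' k : ℕ, ‖u (k+1) - u k‖ ^ 2) := by
          congr 1
          exact (ENNReal.ofReal_tsum_of_nonneg (fun k => by positivity) hsum).symm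
  exact chi_converges_aux (volume.restrict Ω) hμfin
    (fun k => (u k : EuclideanSpace ℝ (Fin n) → ℝ))
    (fun k => Lp.stronglyMeasurable _) hΔsum
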